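/- For linear operators A₁,...,A_{2n} on a finite-dimensional complex vector space V, the Nambu generalized commutator satisfies [A₁,...,A_{2n}] = (1/2ⁿ) Σ_{σ∈S_{2n}} sign(σ) [A_{σ(1)},A_{σ(2)}][A_{σ(3)},A_{σ(4)}]⋯[A_{σ(2n−1)},A_{σ(2n)}], where the sum runs over all permutations σ of {1,...,2n}. -/

import Mathlib

/-- The Nambu generalized commutator. -/
noncomputable def nambu {R : Type*} [Ring R] {n : ℕ} (A : Fin n → R) : R :=
  ∑ σ : Equiv.Perm (Fin n), (Equiv.Perm.sign σ : ℤ) • (List.ofFn fun i => A (σ i)).prod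

/-- The commutator `[A,B] = AB - BA`. -/
def commOp {R : Type*} [Ring R] (A B : R) : R := A * B - B * A

section auxlemmas
variable {R : Type*} [Ring R]

lemma expand_prod_sub : ∀ (n : ℕ) (X Y : Fin n → R),
    (List.ofFn fun j => X j - Y j).prod =
      ∑ ε : Fin n → Bool,
        (∏ j, if ε j then (-1 : ℤ) else 1) •
          (List.ofFn fun j => if ε j then Y j else X j).prod := by
  intro n
  induction n with
  | zero =>
    intro X Y
    simp
  | succ n ih =>
    intro X Y
    rw [List.ofFn_succ, List.prod_cons, sub_mul, ih]
    rw [← Equiv.sum_comp (Fin.consEquiv (fun _ : Fin (n+1) => Bool)), Fintype.sum_prod_type]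
    rw [Fintype.sum_bool]
    simp only [Fin.consEquiv_apply, Fin.prod_univ_succ, List.ofFn_succ, List.prod_cons,
      Fin.cons_zero, Fin.cons_succ, if_true, if_false, one_mul, neg_one_mul, neg_smul,
      mul_smul_comm, Finset.mul_sum]
    rw [sub_eq_add_neg, add_comm, ← Finset.sum_neg_distrib]
    simp

lemma ofFn_pair_prod : ∀ (n : ℕ) (m : ℕ) (h : m = 2 * n) (f : Fin m → R),
    (List.ofFn f).prod =
      (List.ofFn fun j : Fin n =>
        f ⟨2 * j.1, by omega⟩ * f ⟨2 * j.1 + 1, by omega⟩).prod := by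
  intro n
  induction n with
  | zero =>
    intro m h f
    subst h
    simp
  | succ n ih =>
    intro m h f
    obtain ⟨k, rfl⟩ : ∃ k, m = k + 2 := ⟨2 * n, by omega⟩
    have hk : k = 2 * n := by omega
    rw [List.ofFn_succ, List.ofFn_succ, List.prod_cons, List.prod_cons,
      ih k hk (fun i => f i.succ.succ), List.ofFn_succ (n := n), List.prod_cons, ← mul_assoc]
    congr 1
end auxlemmas

section tau
variable {n : ℕ}

/-- The swap of the `j`-th pair `(2j, 2j+1)` inside `Fin (2n)`. -/
def sw (n : ℕ) (j : Fin n) : Equiv.Perm (Fin (2 * n)) :=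
  Equiv.swap ⟨2 * j.1, by omega⟩ ⟨2 * j.1 + 1, by omega⟩

/-- The factors selected by `ε`. -/
def tauf (ε : Fin n → Bool) : Fin n → Equiv.Perm (Fin (2 * n)) :=
  fun j => if ε j then sw n j else 1

lemma sw_apply_of_ne (a : Fin n) (x : Fin (2 * n)) (h1 : x.1 ≠ 2 * a.1)
    (h2 : x.1 ≠ 2 * a.1 + 1) : sw n a x = x :=
  Equiv.swap_apply_of_ne_of_ne (by simp [Fin.ext_iff, h1]) (by simp [Fin.ext_iff, h2])

lemma tauf_commute (ε : Fin n → Bool) (s : Finset (Fin n)) :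
    (↑s : Set (Fin n)).Pairwise (Function.onFun Commute (tauf ε)) := by
  intro i _ j _ hij
  unfold Function.onFun tauf
  by_cases hi : ε i = true
  · by_cases hj : ε j = true
    · simp only [hi, hj, if_true]
      apply Equiv.Perm.Disjoint.commute
      intro x
      by_cases hx1 : x.1 = 2 * i.1
      · right
        apply sw_apply_of_ne <;> have := Fin.val_ne_of_ne hij <;> omega
      · by_cases hx2 : x.1 = 2 * i.1 + 1
        · right
          apply sw_apply_of_ne <;> have := Fin.val_ne_of_ne hij <;> omega
        · left
          exact sw_apply_of_ne i x hx1 hx2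
    · simp [hj, Commute.one_right]
  · simp [hi, Commute.one_left]

/-- Product of the pair swaps selected by `ε`. -/
def tau (ε : Fin n → Bool) : Equiv.Perm (Fin (2 * n)) :=
  Finset.univ.noncommProd (tauf ε) (tauf_commute ε _)

lemma tauAux_apply (ε : Fin n → Bool) (s : Finset (Fin n)) (j : Fin n) :
    (s.noncommProd (tauf ε) (tauf_commute ε s)) ⟨2 * j.1, by omega⟩ =
        (if j ∈ s ∧ ε j then (⟨2 * j.1 + 1, by omega⟩ : Fin (2 * n)) else ⟨2 * j.1, by omega⟩) ∧
      (s.noncommProd (tauf ε) (tauf_commute ε s)) ⟨2 * j.1 + 1, by omega⟩ =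
        (if j ∈ s ∧ ε j then (⟨2 * j.1, by omega⟩ : Fin (2 * n)) else ⟨2 * j.1 + 1, by omega⟩) := by
  induction s using Finset.cons_induction with
  | empty => simp
  | cons a s ha ih =>
    rw [Finset.noncommProd_cons]
    obtain ⟨ih1, ih2⟩ := ih
    simp only [Equiv.Perm.mul_apply, ih1, ih2, Finset.mem_cons]
    by_cases haj : a = j
    · subst haj
      have hjs : ¬ (a ∈ s ∧ ε a = true) := fun h => ha h.1
      simp only [hjs, if_false]
      by_cases hε : ε a = true
      · simp only [hε, if_true, and_true, true_or, if_pos, tauf, sw, Equiv.swap_apply_left,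
          Equiv.swap_apply_right]
      · simp [hε, tauf]
    · have hv := Fin.val_ne_of_ne haj
      have key : ∀ x : Fin (2 * n), x.1 ≠ 2 * a.1 → x.1 ≠ 2 * a.1 + 1 → tauf ε a x = x := by
        intro x hx1 hx2
        by_cases hε : ε a = true
        · simpa [tauf, hε] using sw_apply_of_ne a x hx1 hx2
        · simp [tauf, hε]
      have hcond : ((j = a ∨ j ∈ s) ∧ ε j = true) ↔ (j ∈ s ∧ ε j = true) := by
        constructor
        · rintro ⟨(h | h), he⟩
          · exact absurd h.symm haj
          · exact ⟨h, he⟩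
        · exact fun h => ⟨Or.inr h.1, h.2⟩
      simp only [hcond]
      constructor <;> by_cases h : j ∈ s ∧ ε j = true <;>
        simp only [h, if_true, if_false] <;> apply key <;> simp <;> omega

lemma tau_apply_even (ε : Fin n → Bool) (j : Fin n) (h : 2 * j.1 < 2 * n) :
    tau ε ⟨2 * j.1, h⟩ = if ε j then ⟨2 * j.1 + 1, by omega⟩ else ⟨2 * j.1, h⟩ := by
  have := (tauAux_apply ε Finset.univ j).1
  simpa [tau] using this

lemma tau_apply_odd (ε : Fin n → Bool) (j : Fin n) (h : 2 * j.1 + 1 < 2 * n) :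
    tau ε ⟨2 * j.1 + 1, h⟩ = if ε j then ⟨2 * j.1, by omega⟩ else ⟨2 * j.1 + 1, h⟩ := by
  have := (tauAux_apply ε Finset.univ j).2
  simpa [tau] using this

lemma sign_tau (ε : Fin n → Bool) :
    (Equiv.Perm.sign (tau ε) : ℤ) = ∏ j, if ε j then (-1 : ℤ) else 1 := by
  unfold tau
  rw [Finset.map_noncommProd, Finset.noncommProd_eq_prod]
  push_cast
  apply Finset.prod_congr rfl
  intro j _
  by_cases hε : ε j = true
  · have hne : (⟨2 * j.1, by omega⟩ : Fin (2 * n)) ≠ ⟨2 * j.1 + 1, by omega⟩ := by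
      simp [Fin.ext_iff]
    simp [hε, tauf, sw, Equiv.Perm.sign_swap hne]
  · simp [hε, tauf]
end tau


/-- Lemma `lemcomm2`: the Nambu generalized commutator of operators
`A₁, ..., A_{2n}` on a finite-dimensional complex vector space equals
`(1/2ⁿ) ∑_{σ ∈ S_{2n}} sign(σ) [A_{σ(1)},A_{σ(2)}]⋯[A_{σ(2n-1)},A_{σ(2n)}]`. -/
theorem stmt1 {V : Type*} [AddCommGroup V] [Module ℂ V] [FiniteDimensional ℂ V]
    (n : ℕ) (hn : 0 < n) (A : Fin (2 * n) → Module.End ℂ V) :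
    nambu A =
      ((1 : ℂ) / 2 ^ n) •
        ∑ σ : Equiv.Perm (Fin (2 * n)),
          (Equiv.Perm.sign σ : ℤ) •
            (List.ofFn fun j : Fin n =>
              commOp (A (σ ⟨2 * j.1, by have := j.2; omega⟩))
                     (A (σ ⟨2 * j.1 + 1, by have := j.2; omega⟩))).prod := by
  have step1 : ∀ σ : Equiv.Perm (Fin (2 * n)),
      (List.ofFn fun j : Fin n =>
        commOp (A (σ ⟨2 * j.1, by have := j.2; omega⟩))
               (A (σ ⟨2 * j.1 + 1, by have := j.2; omega⟩))).prod
      = ∑ ε : Fin n → Bool,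
          (∏ j, if ε j then (-1 : ℤ) else 1) •
            (List.ofFn fun i : Fin (2 * n) => A ((σ * tau ε) i)).prod := by
    intro σ
    refine (expand_prod_sub n
      (fun j : Fin n => A (σ ⟨2 * j.1, by omega⟩) * A (σ ⟨2 * j.1 + 1, by omega⟩))
      (fun j : Fin n => A (σ ⟨2 * j.1 + 1, by omega⟩) * A (σ ⟨2 * j.1, by omega⟩))).trans ?_
    refine Finset.sum_congr rfl fun ε _ => ?_
    congr 1
    conv_rhs => rw [ofFn_pair_prod n (2 * n) rfl (fun i => A ((σ * tau ε) i))]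
    refine congrArg List.prod (congrArg List.ofFn (funext fun j => ?_))
    by_cases hε : ε j = true <;>
      simp only [hε, if_true, if_false, Equiv.Perm.mul_apply,
        tau_apply_even ε j (by omega), tau_apply_odd ε j (by omega)] <;> simp
  have step2 : ∀ (ε : Fin n → Bool) (σ : Equiv.Perm (Fin (2 * n))),
      (Equiv.Perm.sign σ : ℤ) * (∏ j, if ε j then (-1 : ℤ) else 1)
        = (Equiv.Perm.sign (σ * tau ε) : ℤ) := by
    intro ε σ
    rw [map_mul, Units.val_mul, sign_tau]
  have hS : (∑ σ : Equiv.Perm (Fin (2 * n)),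
      (Equiv.Perm.sign σ : ℤ) •
        (List.ofFn fun j : Fin n =>
          commOp (A (σ ⟨2 * j.1, by have := j.2; omega⟩))
                 (A (σ ⟨2 * j.1 + 1, by have := j.2; omega⟩))).prod)
      = (2 ^ n : ℕ) • nambu A := by
    calc ∑ σ : Equiv.Perm (Fin (2 * n)), (Equiv.Perm.sign σ : ℤ) •
            (List.ofFn fun j : Fin n =>
              commOp (A (σ ⟨2 * j.1, by have := j.2; omega⟩))
                     (A (σ ⟨2 * j.1 + 1, by have := j.2; omega⟩))).prod
        = ∑ σ : Equiv.Perm (Fin (2 * n)), ∑ ε : Fin n → Bool,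
            (Equiv.Perm.sign (σ * tau ε) : ℤ) •
              (List.ofFn fun i : Fin (2 * n) => A ((σ * tau ε) i)).prod := by
          refine Finset.sum_congr rfl fun σ _ => ?_
          rw [step1 σ, Finset.smul_sum]
          refine Finset.sum_congr rfl fun ε _ => ?_
          rw [smul_smul, step2 ε σ]
      _ = ∑ ε : Fin n → Bool, ∑ σ : Equiv.Perm (Fin (2 * n)),
            (Equiv.Perm.sign (σ * tau ε) : ℤ) •
              (List.ofFn fun i : Fin (2 * n) => A ((σ * tau ε) i)).prod :=
          Finset.sum_comm
      _ = ∑ ε : Fin n → Bool, nambu A := by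
          refine Finset.sum_congr rfl fun ε _ => ?_
          exact Fintype.sum_equiv (Equiv.mulRight (tau ε)) _
            (fun π => (Equiv.Perm.sign π : ℤ) • (List.ofFn fun i => A (π i)).prod)
            (fun σ => rfl)
      _ = (2 ^ n : ℕ) • nambu A := by
          rw [Finset.sum_const, Finset.card_univ]
          congr 1
          simp [Fintype.card_fun]
  rw [hS, ← Nat.cast_smul_eq_nsmul ℂ, smul_smul]
  rw [show ((1 : ℂ) / 2 ^ n) * ((2 ^ n : ℕ) : ℂ) = 1 by
    push_cast
    field_simp]
  rw [one_smul]
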